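/- Let k ≥ 4 and n ≥ 1. The graph G_{k,n} admits a (2n(k+1)+1, 2n)-total colouring; hence χ''_c(G_{k,n}) ≤ k + 1 + 1/(2n). -/

import Mathlib

open SimpleGraph

/-- A proper total colouring of `G` with `p` colours: vertex colours `cv`,
edge colours `ce` (symmetric on adjacent pairs); adjacent vertices, adjacent
edges and incident vertex-edge pairs get distinct colours. -/
def IsTotalColoring {V : Type*} (G : SimpleGraph V) (p : ℕ)
    (cv : V → Fin p) (ce : V → V → Fin p) : Prop :=
  (∀ u v, G.Adj u v → ce u v = ce v u) ∧
  (∀ u v, G.Adj u v → cv u ≠ cv v) ∧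
  (∀ u v w, G.Adj u v → G.Adj u w → v ≠ w → ce u v ≠ ce u w) ∧
  (∀ u v, G.Adj u v → ce u v ≠ cv u ∧ ce u v ≠ cv v)

/-- circular distance condition: `q ≤ |a - b| ≤ p - q`. -/
def circOk (p q a b : ℕ) : Prop :=
  q ≤ max a b - min a b ∧ max a b - min a b ≤ p - q

/-- A `(p,q)`-total colouring of `G`. -/
def IsCircTotalColoring {V : Type*} (G : SimpleGraph V) (p q : ℕ)
    (cv : V → ℕ) (ce : V → V → ℕ) : Prop :=
  (∀ v, cv v < p) ∧
  (∀ u v, G.Adj u v → ce u v < p) ∧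
  (∀ u v, G.Adj u v → ce u v = ce v u) ∧
  (∀ u v, G.Adj u v → circOk p q (cv u) (cv v)) ∧
  (∀ u v w, G.Adj u v → G.Adj u w → v ≠ w → circOk p q (ce u v) (ce u w)) ∧
  (∀ u v, G.Adj u v → circOk p q (ce u v) (cv u) ∧ circOk p q (ce u v) (cv v))

/-- The circular total chromatic number of `G`. -/
noncomputable def circTotalChromatic {V : Type*} (G : SimpleGraph V) : ℝ :=
  sInf {x : ℝ | ∃ p q : ℕ, 0 < q ∧
    (∃ cv ce, IsCircTotalColoring G p q cv ce) ∧ x = (p : ℝ) / q}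

/-- The chain graph `G_{k,n}`: `n` blocks, each a copy of `K_{k,k-1}` with
partite sets `Fin k` (the `X`-side) and `Fin (k-1)` (the `Y`-side); in block `i`
the designated link vertices are `x_i = (i, inl 0)` and `x'_i = (i, inl 1)`;
the extra vertex `u` is `none`, joined to `x'_1` and `x_n`, and `x_i` is joined
to `x'_{i+1}`. -/
def Gkn (k n : ℕ) : SimpleGraph (Option (Fin n × (Fin k ⊕ Fin (k - 1)))) :=
  SimpleGraph.fromRel (fun a b =>
    (∃ (i : Fin n) (x : Fin k) (y : Fin (k - 1)),
        a = some (i, Sum.inl x) ∧ b = some (i, Sum.inr y)) ∨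
    (∃ (i j : Fin n) (x x' : Fin k), (j : ℕ) = (i : ℕ) + 1 ∧ (x : ℕ) = 0 ∧ (x' : ℕ) = 1 ∧
        a = some (i, Sum.inl x) ∧ b = some (j, Sum.inl x')) ∨
    (∃ (i : Fin n) (x' : Fin k), (i : ℕ) = 0 ∧ (x' : ℕ) = 1 ∧
        a = none ∧ b = some (i, Sum.inl x')) ∨
    (∃ (i : Fin n) (x : Fin k), (i : ℕ) = n - 1 ∧ (x : ℕ) = 0 ∧
        a = some (i, Sum.inl x) ∧ b = none))

def cvX (k n i a : ℕ) : ℕ :=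
  if a = 0 then 2*i+1 else if a = 1 then 2*n*(k-1) + 2*i else 2*n*(a-1) + 2*i

def cvY (k n i : ℕ) : ℕ := 2*n*k + 2*i + 1

def edC (k n i a b : ℕ) : ℕ :=
  if a = 0 then 2*n*(b+1) + 2*i + 1
  else if a = 1 then 2*n*b + 2*i
  else if a + b < k then 2*n*(a+b) + 2*i + 1
  else 2*n*(a+b-k) + 2*i

def cvF (k n : ℕ) : Option (Fin n × (Fin k ⊕ Fin (k-1))) → ℕ
  | none => 4*n
  | some (i, Sum.inl a) => cvX k n i a
  | some (i, Sum.inr _) => cvY k n i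

def ceF (k n : ℕ) : Option (Fin n × (Fin k ⊕ Fin (k-1))) → Option (Fin n × (Fin k ⊕ Fin (k-1))) → ℕ
  | some (_, Sum.inl a), some (j, Sum.inr b) => edC k n j a b
  | some (i, Sum.inr b), some (_, Sum.inl a) => edC k n i a b
  | some (i, Sum.inl _), some (j, Sum.inl _) => 2*n*k + 2*(min (i:ℕ) (j:ℕ)) + 2
  | none, some (_, Sum.inl a) => if (a:ℕ) = 1 then 2*n*k else 2*n*k + 2*n
  | some (_, Sum.inl a), none => if (a:ℕ) = 1 then 2*n*k else 2*n*k + 2*n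
  | _, _ => 0

lemma circOk_comm {p q a b : ℕ} (h : circOk p q a b) : circOk p q b a := by
  unfold circOk at *; rwa [max_comm, min_comm]

lemma circLe (n k : ℕ) (hk : 4 ≤ k) (l1 l2 r1 r2 c1 c2 : ℕ)
    (hc1 : c1 = 2*n*l1 + r1) (hc2 : c2 = 2*n*l2 + r2)
    (hl : l1 < l2) (hl2 : l2 ≤ k+1) (hr1 : r1 ≤ 2*n) (hr2 : r2 ≤ 2*n)
    (h1 : l2 = l1 + 1 → r1 ≤ r2) (h2 : l2 = l1 + k → r2 ≤ r1 + 1)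
    (h3 : l2 = l1 + k + 1 → r2 + 2*n ≤ r1 + 1) :
    circOk (2*n*(k+1)+1) (2*n) c1 c2 := by
  subst hc1 hc2
  unfold circOk
  have key : 2*n*l2 = 2*n*l1 + 2*n*(l2 - l1) := by
    rw [← Nat.mul_add, Nat.add_sub_cancel' (le_of_lt hl)]
  have f7 : 2*n*(k+1) = 2*n*k + 2*n := by ring
  have hk2 : 2*n*2 ≤ 2*n*k := Nat.mul_le_mul_left _ (by omega)
  have e22 : 2*n*2 = 2*n + 2*n := by ring
  have hcase : l2 - l1 = 1 ∨ (2 ≤ l2 - l1 ∧ l2 - l1 + 1 ≤ k) ∨ l2 - l1 = k ∨ l2 - l1 = k+1 := by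
    omega
  rcases hcase with hm | ⟨hm, hm'⟩ | hm | hm
  · have hr := h1 (by omega)
    have : 2*n*(l2-l1) = 2*n := by rw [hm, mul_one]
    omega
  · have g2 : 2*n*2 ≤ 2*n*(l2-l1) := Nat.mul_le_mul_left _ hm
    have g4 : 2*n*((l2-l1)+1) ≤ 2*n*k := Nat.mul_le_mul_left _ hm'
    have e4 : 2*n*((l2-l1)+1) = 2*n*(l2-l1) + 2*n := by ring
    omega
  · have hr := h2 (by omega)
    have : 2*n*(l2-l1) = 2*n*k := by rw [hm]
    omega
  · have hr := h3 (by omega)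
    have : 2*n*(l2-l1) = 2*n*k + 2*n := by rw [hm]; ring
    omega

lemma circGe (n k : ℕ) (hk : 4 ≤ k) (l1 l2 r1 r2 c1 c2 : ℕ)
    (hc1 : c1 = 2*n*l1 + r1) (hc2 : c2 = 2*n*l2 + r2)
    (hl : l1 < l2) (hl2 : l2 ≤ k+1) (hr1 : r1 ≤ 2*n) (hr2 : r2 ≤ 2*n)
    (h1 : l2 = l1 + 1 → r1 ≤ r2) (h2 : l2 = l1 + k → r2 ≤ r1 + 1)
    (h3 : l2 = l1 + k + 1 → r2 + 2*n ≤ r1 + 1) :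
    circOk (2*n*(k+1)+1) (2*n) c2 c1 :=
  circOk_comm (circLe n k hk l1 l2 r1 r2 c1 c2 hc1 hc2 hl hl2 hr1 hr2 h1 h2 h3)
section Pairs

lemma vXY (n k : ℕ) (hn : 1 ≤ n) (hk : 4 ≤ k) (i a : ℕ) (hi : i < n) (ha : a < k) :
    circOk (2*n*(k+1)+1) (2*n) (cvX k n i a) (cvY k n i) := by
  by_cases h0 : a = 0
  · exact circLe n k hk 0 k (2*i+1) (2*i+1) _ _ (by simp [cvX, h0]; try ring) (by simp [cvY]; try ring)
      (by omega) (by omega) (by omega) (by omega)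
      (fun h => by omega) (fun h => by omega) (fun h => by omega)
  · by_cases h1 : a = 1
    · exact circLe n k hk (k-1) k (2*i) (2*i+1) _ _ (by simp [cvX, h0, h1]; try ring) (by simp [cvY]; try ring)
        (by omega) (by omega) (by omega) (by omega)
        (fun h => by omega) (fun h => by omega) (fun h => by omega)
    · exact circLe n k hk (a-1) k (2*i) (2*i+1) _ _ (by simp [cvX, h0, h1]; try ring) (by simp [cvY]; try ring)
        (by omega) (by omega) (by omega) (by omega)
        (fun h => by omega) (fun h => by omega) (fun h => by omega)

lemma vXX' (n k : ℕ) (hn : 1 ≤ n) (hk : 4 ≤ k) (i : ℕ) (hi : i + 1 < n) :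
    circOk (2*n*(k+1)+1) (2*n) (cvX k n i 0) (cvX k n (i+1) 1) := by
  exact circLe n k hk 0 (k-1) (2*i+1) (2*(i+1)) _ _ (by simp [cvX]; try ring) (by simp [cvX]; try ring)
    (by omega) (by omega) (by omega) (by omega)
    (fun h => by omega) (fun h => by omega) (fun h => by omega)

lemma vUX' (n k : ℕ) (hn : 1 ≤ n) (hk : 4 ≤ k) :
    circOk (2*n*(k+1)+1) (2*n) (4*n) (cvX k n 0 1) := by
  exact circLe n k hk 2 (k-1) 0 0 _ _ (by ring) (by simp [cvX]; try ring)
    (by omega) (by omega) (by omega) (by omega)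
    (fun h => by omega) (fun h => by omega) (fun h => by omega)

lemma vXU (n k : ℕ) (hn : 1 ≤ n) (hk : 4 ≤ k) :
    circOk (2*n*(k+1)+1) (2*n) (cvX k n (n-1) 0) (4*n) := by
  exact circLe n k hk 0 2 (2*(n-1)+1) 0 _ _ (by simp [cvX]; try ring) (by ring)
    (by omega) (by omega) (by omega) (by omega)
    (fun h => by omega) (fun h => by omega) (fun h => by omega)

lemma eXY_x (n k : ℕ) (hn : 1 ≤ n) (hk : 4 ≤ k) (i a b : ℕ) (hi : i < n) (ha : a < k) (hb : b < k-1) :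
    circOk (2*n*(k+1)+1) (2*n) (edC k n i a b) (cvX k n i a) := by
  by_cases h0 : a = 0
  · exact circGe n k hk 0 (b+1) (2*i+1) (2*i+1) _ _ (by simp [cvX, h0]; try ring) (by simp [edC, h0]; try ring)
      (by omega) (by omega) (by omega) (by omega)
      (fun h => by omega) (fun h => by omega) (fun h => by omega)
  · by_cases h1 : a = 1
    · exact circLe n k hk b (k-1) (2*i) (2*i) _ _ (by simp [edC, h0, h1]; try ring) (by simp [cvX, h0, h1]; try ring)
        (by omega) (by omega) (by omega) (by omega)
        (fun h => by omega) (fun h => by omega) (fun h => by omega)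
    · by_cases hC : a + b < k
      · exact circGe n k hk (a-1) (a+b) (2*i) (2*i+1) _ _ (by simp [cvX, h0, h1]; try ring) (by simp [edC, h0, h1, hC]; try ring)
          (by omega) (by omega) (by omega) (by omega)
          (fun h => by omega) (fun h => by omega) (fun h => by omega)
      · exact circLe n k hk (a+b-k) (a-1) (2*i) (2*i) _ _ (by simp [edC, h0, h1, hC]; try ring) (by simp [cvX, h0, h1]; try ring)
          (by omega) (by omega) (by omega) (by omega)
          (fun h => by omega) (fun h => by omega) (fun h => by omega)

lemma eXY_y (n k : ℕ) (hn : 1 ≤ n) (hk : 4 ≤ k) (i a b : ℕ) (hi : i < n) (ha : a < k) (hb : b < k-1) :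
    circOk (2*n*(k+1)+1) (2*n) (edC k n i a b) (cvY k n i) := by
  by_cases h0 : a = 0
  · exact circLe n k hk (b+1) k (2*i+1) (2*i+1) _ _ (by simp [edC, h0]; try ring) (by simp [cvY]; try ring)
      (by omega) (by omega) (by omega) (by omega)
      (fun h => by omega) (fun h => by omega) (fun h => by omega)
  · by_cases h1 : a = 1
    · exact circLe n k hk b k (2*i) (2*i+1) _ _ (by simp [edC, h0, h1]; try ring) (by simp [cvY]; try ring)
        (by omega) (by omega) (by omega) (by omega)
        (fun h => by omega) (fun h => by omega) (fun h => by omega)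
    · by_cases hC : a + b < k
      · exact circLe n k hk (a+b) k (2*i+1) (2*i+1) _ _ (by simp [edC, h0, h1, hC]; try ring) (by simp [cvY]; try ring)
          (by omega) (by omega) (by omega) (by omega)
          (fun h => by omega) (fun h => by omega) (fun h => by omega)
      · exact circLe n k hk (a+b-k) k (2*i) (2*i+1) _ _ (by simp [edC, h0, h1, hC]; try ring) (by simp [cvY]; try ring)
          (by omega) (by omega) (by omega) (by omega)
          (fun h => by omega) (fun h => by omega) (fun h => by omega)

end Pairs
section Links

lemma eL_x (n k : ℕ) (hn : 1 ≤ n) (hk : 4 ≤ k) (i : ℕ) (hi : i + 1 < n) :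
    circOk (2*n*(k+1)+1) (2*n) (2*n*k + 2*i + 2) (cvX k n i 0) := by
  exact circGe n k hk 0 k (2*i+1) (2*i+2) _ _ (by simp [cvX]; try ring) (by ring)
    (by omega) (by omega) (by omega) (by omega)
    (fun h => by omega) (fun h => by omega) (fun h => by omega)

lemma eL_x' (n k : ℕ) (hn : 1 ≤ n) (hk : 4 ≤ k) (i : ℕ) (hi : i + 1 < n) :
    circOk (2*n*(k+1)+1) (2*n) (2*n*k + 2*i + 2) (cvX k n (i+1) 1) := by
  exact circGe n k hk (k-1) k (2*(i+1)) (2*i+2) _ _ (by simp [cvX]; try ring) (by ring)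
    (by omega) (by omega) (by omega) (by omega)
    (fun h => by omega) (fun h => by omega) (fun h => by omega)

lemma e0_u (n k : ℕ) (hn : 1 ≤ n) (hk : 4 ≤ k) :
    circOk (2*n*(k+1)+1) (2*n) (2*n*k) (4*n) := by
  exact circGe n k hk 2 k 0 0 _ _ (by ring) (by ring)
    (by omega) (by omega) (by omega) (by omega)
    (fun h => by omega) (fun h => by omega) (fun h => by omega)

lemma e0_x' (n k : ℕ) (hn : 1 ≤ n) (hk : 4 ≤ k) :
    circOk (2*n*(k+1)+1) (2*n) (2*n*k) (cvX k n 0 1) := by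
  exact circGe n k hk (k-1) k 0 0 _ _ (by simp [cvX]; try ring) (by ring)
    (by omega) (by omega) (by omega) (by omega)
    (fun h => by omega) (fun h => by omega) (fun h => by omega)

lemma en_x (n k : ℕ) (hn : 1 ≤ n) (hk : 4 ≤ k) :
    circOk (2*n*(k+1)+1) (2*n) (2*n*k + 2*n) (cvX k n (n-1) 0) := by
  exact circGe n k hk 0 (k+1) (2*(n-1)+1) 0 _ _ (by simp [cvX]; try ring) (by ring)
    (by omega) (by omega) (by omega) (by omega)
    (fun h => by omega) (fun h => by omega) (fun h => by omega)

lemma en_u (n k : ℕ) (hn : 1 ≤ n) (hk : 4 ≤ k) :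
    circOk (2*n*(k+1)+1) (2*n) (2*n*k + 2*n) (4*n) := by
  exact circGe n k hk 2 (k+1) 0 0 _ _ (by ring) (by ring)
    (by omega) (by omega) (by omega) (by omega)
    (fun h => by omega) (fun h => by omega) (fun h => by omega)

lemma e0_en (n k : ℕ) (hn : 1 ≤ n) (hk : 4 ≤ k) :
    circOk (2*n*(k+1)+1) (2*n) (2*n*k) (2*n*k + 2*n) := by
  exact circLe n k hk k (k+1) 0 0 _ _ (by ring) (by ring)
    (by omega) (by omega) (by omega) (by omega)
    (fun h => by omega) (fun h => by omega) (fun h => by omega)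

lemma row0_eL (n k : ℕ) (hn : 1 ≤ n) (hk : 4 ≤ k) (i b : ℕ) (hi : i + 1 < n) (hb : b < k-1) :
    circOk (2*n*(k+1)+1) (2*n) (edC k n i 0 b) (2*n*k + 2*i + 2) := by
  exact circLe n k hk (b+1) k (2*i+1) (2*i+2) _ _ (by simp [edC]; try ring) (by ring)
    (by omega) (by omega) (by omega) (by omega)
    (fun h => by omega) (fun h => by omega) (fun h => by omega)

lemma row1_eL (n k : ℕ) (hn : 1 ≤ n) (hk : 4 ≤ k) (i b : ℕ) (hi : i < n) (hi1 : 1 ≤ i) (hb : b < k-1) :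
    circOk (2*n*(k+1)+1) (2*n) (edC k n i 1 b) (2*n*k + 2*(i-1) + 2) := by
  exact circLe n k hk b k (2*i) (2*(i-1)+2) _ _ (by simp [edC]; try ring) (by ring)
    (by omega) (by omega) (by omega) (by omega)
    (fun h => by omega) (fun h => by omega) (fun h => by omega)

lemma row1_e0 (n k : ℕ) (hn : 1 ≤ n) (hk : 4 ≤ k) (b : ℕ) (hb : b < k-1) :
    circOk (2*n*(k+1)+1) (2*n) (edC k n 0 1 b) (2*n*k) := by
  exact circLe n k hk b k 0 0 _ _ (by simp [edC]; try ring) (by ring)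
    (by omega) (by omega) (by omega) (by omega)
    (fun h => by omega) (fun h => by omega) (fun h => by omega)

lemma row0_en (n k : ℕ) (hn : 1 ≤ n) (hk : 4 ≤ k) (b : ℕ) (hb : b < k-1) :
    circOk (2*n*(k+1)+1) (2*n) (edC k n (n-1) 0 b) (2*n*k + 2*n) := by
  exact circLe n k hk (b+1) (k+1) (2*(n-1)+1) 0 _ _ (by simp [edC]; try ring) (by ring)
    (by omega) (by omega) (by omega) (by omega)
    (fun h => by omega) (fun h => by omega) (fun h => by omega)

end Links
section RowCol

lemma colPairLt (n k : ℕ) (hn : 1 ≤ n) (hk : 4 ≤ k) (i a1 a2 b : ℕ) (hi : i < n)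
    (hb : b < k-1) (ha2 : a2 < k) (hlt : a1 < a2) :
    circOk (2*n*(k+1)+1) (2*n) (edC k n i a1 b) (edC k n i a2 b) := by
  by_cases h10 : a1 = 0
  · by_cases h21 : a2 = 1
    · exact circGe n k hk b (b+1) (2*i) (2*i+1) _ _ (by simp [edC, h21]; try ring)
        (by simp [edC, h10]; try ring)
        (by omega) (by omega) (by omega) (by omega)
        (fun h => by omega) (fun h => by omega) (fun h => by omega)
    · have h20 : ¬ a2 = 0 := by omega
      by_cases hC2 : a2 + b < k
      · exact circLe n k hk (b+1) (a2+b) (2*i+1) (2*i+1) _ _ (by simp [edC, h10]; try ring)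
          (by simp [edC, h20, h21, hC2]; try ring)
          (by omega) (by omega) (by omega) (by omega)
          (fun h => by omega) (fun h => by omega) (fun h => by omega)
      · exact circGe n k hk (a2+b-k) (b+1) (2*i) (2*i+1) _ _ (by simp [edC, h20, h21, hC2]; try ring)
          (by simp [edC, h10]; try ring)
          (by omega) (by omega) (by omega) (by omega)
          (fun h => by omega) (fun h => by omega) (fun h => by omega)
  · by_cases h11 : a1 = 1
    · have h20 : ¬ a2 = 0 := by omega
      have h21 : ¬ a2 = 1 := by omega
      by_cases hC2 : a2 + b < k
      · exact circLe n k hk b (a2+b) (2*i) (2*i+1) _ _ (by simp [edC, h10, h11]; try ring)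
          (by simp [edC, h20, h21, hC2]; try ring)
          (by omega) (by omega) (by omega) (by omega)
          (fun h => by omega) (fun h => by omega) (fun h => by omega)
      · exact circGe n k hk (a2+b-k) b (2*i) (2*i) _ _ (by simp [edC, h20, h21, hC2]; try ring)
          (by simp [edC, h10, h11]; try ring)
          (by omega) (by omega) (by omega) (by omega)
          (fun h => by omega) (fun h => by omega) (fun h => by omega)
    · have h20 : ¬ a2 = 0 := by omega
      have h21 : ¬ a2 = 1 := by omega
      have ha1 : 2 ≤ a1 := by omega
      by_cases hC1 : a1 + b < k
      · by_cases hC2 : a2 + b < k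
        · exact circLe n k hk (a1+b) (a2+b) (2*i+1) (2*i+1) _ _ (by simp [edC, h10, h11, hC1]; try ring)
            (by simp [edC, h20, h21, hC2]; try ring)
            (by omega) (by omega) (by omega) (by omega)
            (fun h => by omega) (fun h => by omega) (fun h => by omega)
        · exact circGe n k hk (a2+b-k) (a1+b) (2*i) (2*i+1) _ _ (by simp [edC, h20, h21, hC2]; try ring)
            (by simp [edC, h10, h11, hC1]; try ring)
            (by omega) (by omega) (by omega) (by omega)
            (fun h => by omega) (fun h => by omega) (fun h => by omega)
      · have hC2 : ¬ a2 + b < k := by omega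
        exact circLe n k hk (a1+b-k) (a2+b-k) (2*i) (2*i) _ _ (by simp [edC, h10, h11, hC1]; try ring)
          (by simp [edC, h20, h21, hC2]; try ring)
          (by omega) (by omega) (by omega) (by omega)
          (fun h => by omega) (fun h => by omega) (fun h => by omega)

lemma colPair (n k : ℕ) (hn : 1 ≤ n) (hk : 4 ≤ k) (i a1 a2 b : ℕ) (hi : i < n)
    (hb : b < k-1) (ha1 : a1 < k) (ha2 : a2 < k) (hne : a1 ≠ a2) :
    circOk (2*n*(k+1)+1) (2*n) (edC k n i a1 b) (edC k n i a2 b) := by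
  rcases Nat.lt_or_ge a1 a2 with h | h
  · exact colPairLt n k hn hk i a1 a2 b hi hb ha2 h
  · exact circOk_comm (colPairLt n k hn hk i a2 a1 b hi hb ha1 (by omega))

lemma rowPairLt (n k : ℕ) (hn : 1 ≤ n) (hk : 4 ≤ k) (i a b1 b2 : ℕ) (hi : i < n)
    (ha : a < k) (hb2 : b2 < k-1) (hlt : b1 < b2) :
    circOk (2*n*(k+1)+1) (2*n) (edC k n i a b1) (edC k n i a b2) := by
  by_cases h0 : a = 0
  · exact circLe n k hk (b1+1) (b2+1) (2*i+1) (2*i+1) _ _ (by simp [edC, h0]; try ring)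
      (by simp [edC, h0]; try ring)
      (by omega) (by omega) (by omega) (by omega)
      (fun h => by omega) (fun h => by omega) (fun h => by omega)
  · by_cases h1 : a = 1
    · exact circLe n k hk b1 b2 (2*i) (2*i) _ _ (by simp [edC, h0, h1]; try ring)
        (by simp [edC, h0, h1]; try ring)
        (by omega) (by omega) (by omega) (by omega)
        (fun h => by omega) (fun h => by omega) (fun h => by omega)
    · by_cases hC1 : a + b1 < k
      · by_cases hC2 : a + b2 < k
        · exact circLe n k hk (a+b1) (a+b2) (2*i+1) (2*i+1) _ _ (by simp [edC, h0, h1, hC1]; try ring)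
            (by simp [edC, h0, h1, hC2]; try ring)
            (by omega) (by omega) (by omega) (by omega)
            (fun h => by omega) (fun h => by omega) (fun h => by omega)
        · exact circGe n k hk (a+b2-k) (a+b1) (2*i) (2*i+1) _ _ (by simp [edC, h0, h1, hC2]; try ring)
            (by simp [edC, h0, h1, hC1]; try ring)
            (by omega) (by omega) (by omega) (by omega)
            (fun h => by omega) (fun h => by omega) (fun h => by omega)
      · have hC2 : ¬ a + b2 < k := by omega
        exact circLe n k hk (a+b1-k) (a+b2-k) (2*i) (2*i) _ _ (by simp [edC, h0, h1, hC1]; try ring)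
          (by simp [edC, h0, h1, hC2]; try ring)
          (by omega) (by omega) (by omega) (by omega)
          (fun h => by omega) (fun h => by omega) (fun h => by omega)

lemma rowPair (n k : ℕ) (hn : 1 ≤ n) (hk : 4 ≤ k) (i a b1 b2 : ℕ) (hi : i < n)
    (ha : a < k) (hb1 : b1 < k-1) (hb2 : b2 < k-1) (hne : b1 ≠ b2) :
    circOk (2*n*(k+1)+1) (2*n) (edC k n i a b1) (edC k n i a b2) := by
  rcases Nat.lt_or_ge b1 b2 with h | h
  · exact rowPairLt n k hn hk i a b1 b2 hi ha hb2 h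
  · exact circOk_comm (rowPairLt n k hn hk i a b2 b1 hi ha hb1 (by omega))

end RowCol
section Bounds

lemma cvX_lt (n k : ℕ) (hn : 1 ≤ n) (hk : 4 ≤ k) (i a : ℕ) (hi : i < n) (ha : a < k) :
    cvX k n i a < 2*n*(k+1)+1 := by
  have f7 : 2*n*(k+1) = 2*n*k + 2*n := by ring
  have h1 : 2*n*(k-1) + 2*n*1 ≤ 2*n*k := by
    have : 2*n*((k-1)+1) ≤ 2*n*k := Nat.mul_le_mul_left _ (by omega)
    have e : 2*n*((k-1)+1) = 2*n*(k-1) + 2*n*1 := by ring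
    omega
  have h2 : 2*n*(a-1) ≤ 2*n*(k-1) := Nat.mul_le_mul_left _ (by omega)
  have h3 : 2*n*1 = 2*n := by ring
  unfold cvX
  split_ifs <;> omega

lemma cvY_lt (n k : ℕ) (hn : 1 ≤ n) (hk : 4 ≤ k) (i : ℕ) (hi : i < n) :
    cvY k n i < 2*n*(k+1)+1 := by
  have f7 : 2*n*(k+1) = 2*n*k + 2*n := by ring
  unfold cvY; omega

lemma cvU_lt (n k : ℕ) (hn : 1 ≤ n) (hk : 4 ≤ k) : 4*n < 2*n*(k+1)+1 := by
  have h1 : 2*n*2 ≤ 2*n*(k+1) := Nat.mul_le_mul_left _ (by omega)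
  have e : 2*n*2 = 4*n := by ring
  omega

lemma edC_lt (n k : ℕ) (hn : 1 ≤ n) (hk : 4 ≤ k) (i a b : ℕ) (hi : i < n) (ha : a < k)
    (hb : b < k-1) : edC k n i a b < 2*n*(k+1)+1 := by
  have f7 : 2*n*(k+1) = 2*n*k + 2*n := by ring
  have g1 : 2*n*(b+1) ≤ 2*n*k := Nat.mul_le_mul_left _ (by omega)
  have g2 : 2*n*b ≤ 2*n*k := Nat.mul_le_mul_left _ (by omega)
  have g3 : 2*n*(a+b) ≤ 2*n*(a+b) := le_refl _
  have g4 : a + b < k → 2*n*(a+b) ≤ 2*n*k := fun h => Nat.mul_le_mul_left _ (by omega)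
  have g5 : 2*n*(a+b-k) ≤ 2*n*k := Nat.mul_le_mul_left _ (by omega)
  unfold edC
  split_ifs with u1 u2 u3
  · omega
  · omega
  · have := g4 u3; omega
  · omega

lemma eL_lt (n k : ℕ) (hn : 1 ≤ n) (hk : 4 ≤ k) (i : ℕ) (hi : i + 1 < n) :
    2*n*k + 2*i + 2 < 2*n*(k+1)+1 := by
  have f7 : 2*n*(k+1) = 2*n*k + 2*n := by ring
  omega

lemma en_lt (n k : ℕ) (hn : 1 ≤ n) (hk : 4 ≤ k) : 2*n*k + 2*n < 2*n*(k+1)+1 := by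
  have f7 : 2*n*(k+1) = 2*n*k + 2*n := by ring
  omega

lemma e0_lt (n k : ℕ) (hn : 1 ≤ n) (hk : 4 ≤ k) : 2*n*k < 2*n*(k+1)+1 := by
  have f7 : 2*n*(k+1) = 2*n*k + 2*n := by ring
  omega

end Bounds
lemma gkn_adj {k n : ℕ} {x y : Option (Fin n × (Fin k ⊕ Fin (k-1)))} (h : (Gkn k n).Adj x y) :
    (∃ (i : Fin n) (a : Fin k) (b : Fin (k-1)), x = some (i, Sum.inl a) ∧ y = some (i, Sum.inr b)) ∨
    (∃ (i : Fin n) (a : Fin k) (b : Fin (k-1)), x = some (i, Sum.inr b) ∧ y = some (i, Sum.inl a)) ∨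
    (∃ (i j : Fin n) (a a' : Fin k), (j:ℕ) = (i:ℕ)+1 ∧ (a:ℕ) = 0 ∧ (a':ℕ) = 1 ∧
        x = some (i, Sum.inl a) ∧ y = some (j, Sum.inl a')) ∨
    (∃ (i j : Fin n) (a a' : Fin k), (j:ℕ) = (i:ℕ)+1 ∧ (a:ℕ) = 0 ∧ (a':ℕ) = 1 ∧
        x = some (j, Sum.inl a') ∧ y = some (i, Sum.inl a)) ∨
    (∃ (i : Fin n) (a : Fin k), (i:ℕ) = 0 ∧ (a:ℕ) = 1 ∧ x = none ∧ y = some (i, Sum.inl a)) ∨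
    (∃ (i : Fin n) (a : Fin k), (i:ℕ) = 0 ∧ (a:ℕ) = 1 ∧ x = some (i, Sum.inl a) ∧ y = none) ∨
    (∃ (i : Fin n) (a : Fin k), (i:ℕ) = n-1 ∧ (a:ℕ) = 0 ∧ x = some (i, Sum.inl a) ∧ y = none) ∨
    (∃ (i : Fin n) (a : Fin k), (i:ℕ) = n-1 ∧ (a:ℕ) = 0 ∧ x = none ∧ y = some (i, Sum.inl a)) := by
  rw [Gkn, SimpleGraph.fromRel_adj] at h
  obtain ⟨-, h | h⟩ := h
  · rcases h with ⟨i,a,b,hx,hy⟩ | ⟨i,j,a,a',h1,h2,h3,hx,hy⟩ | ⟨i,a,h1,h2,hx,hy⟩ | ⟨i,a,h1,h2,hx,hy⟩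
    · exact Or.inl ⟨i,a,b,hx,hy⟩
    · exact Or.inr (Or.inr (Or.inl ⟨i,j,a,a',h1,h2,h3,hx,hy⟩))
    · exact Or.inr (Or.inr (Or.inr (Or.inr (Or.inl ⟨i,a,h1,h2,hx,hy⟩))))
    · exact Or.inr (Or.inr (Or.inr (Or.inr (Or.inr (Or.inr (Or.inl ⟨i,a,h1,h2,hx,hy⟩))))))
  · rcases h with ⟨i,a,b,hy,hx⟩ | ⟨i,j,a,a',h1,h2,h3,hy,hx⟩ | ⟨i,a,h1,h2,hy,hx⟩ | ⟨i,a,h1,h2,hy,hx⟩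
    · exact Or.inr (Or.inl ⟨i,a,b,hx,hy⟩)
    · exact Or.inr (Or.inr (Or.inr (Or.inl ⟨i,j,a,a',h1,h2,h3,hx,hy⟩)))
    · exact Or.inr (Or.inr (Or.inr (Or.inr (Or.inr (Or.inl ⟨i,a,h1,h2,hx,hy⟩)))))
    · exact Or.inr (Or.inr (Or.inr (Or.inr (Or.inr (Or.inr (Or.inr ⟨i,a,h1,h2,hx,hy⟩))))))
theorem stmt14 (k n : ℕ) (hk : 4 ≤ k) (hn : 1 ≤ n) :
    (∃ cv ce, IsCircTotalColoring (Gkn k n) (2 * n * (k + 1) + 1) (2 * n) cv ce) ∧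
    circTotalChromatic (Gkn k n) ≤ (k : ℝ) + 1 + 1 / (2 * n) := by
  have hcol : IsCircTotalColoring (Gkn k n) (2*n*(k+1)+1) (2*n) (cvF k n) (ceF k n) := by
    refine ⟨?_, ?_, ?_, ?_, ?_, ?_⟩
    · -- vertex colours < p
      rintro (_ | ⟨i, a | b⟩)
      · exact cvU_lt n k hn hk
      · exact cvX_lt n k hn hk i a i.isLt a.isLt
      · exact cvY_lt n k hn hk i i.isLt
    · -- edge colours < p
      intro x y hadj
      rcases gkn_adj hadj with ⟨i,a,b,rfl,rfl⟩|⟨i,a,b,rfl,rfl⟩|⟨i,j,a,a',hj,ha,ha',rfl,rfl⟩|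
        ⟨i,j,a,a',hj,ha,ha',rfl,rfl⟩|⟨i,a,hi,ha,rfl,rfl⟩|⟨i,a,hi,ha,rfl,rfl⟩|
        ⟨i,a,hi,ha,rfl,rfl⟩|⟨i,a,hi,ha,rfl,rfl⟩
      · exact edC_lt n k hn hk i a b i.isLt a.isLt b.isLt
      · exact edC_lt n k hn hk i a b i.isLt a.isLt b.isLt
      · show 2*n*k + 2*(min (i:ℕ) (j:ℕ)) + 2 < _
        rw [show min (i:ℕ) (j:ℕ) = (i:ℕ) from by omega]
        exact eL_lt n k hn hk i (by have := j.isLt; omega)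
      · show 2*n*k + 2*(min (j:ℕ) (i:ℕ)) + 2 < _
        rw [show min (j:ℕ) (i:ℕ) = (i:ℕ) from by omega]
        exact eL_lt n k hn hk i (by have := j.isLt; omega)
      · show (if (a:ℕ) = 1 then 2*n*k else 2*n*k + 2*n) < _
        rw [if_pos ha]; exact e0_lt n k hn hk
      · show (if (a:ℕ) = 1 then 2*n*k else 2*n*k + 2*n) < _
        rw [if_pos ha]; exact e0_lt n k hn hk
      · show (if (a:ℕ) = 1 then 2*n*k else 2*n*k + 2*n) < _
        rw [if_neg (by omega)]; exact en_lt n k hn hk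
      · show (if (a:ℕ) = 1 then 2*n*k else 2*n*k + 2*n) < _
        rw [if_neg (by omega)]; exact en_lt n k hn hk
    · -- symmetry
      intro x y hadj
      rcases gkn_adj hadj with ⟨i,a,b,rfl,rfl⟩|⟨i,a,b,rfl,rfl⟩|⟨i,j,a,a',hj,ha,ha',rfl,rfl⟩|
        ⟨i,j,a,a',hj,ha,ha',rfl,rfl⟩|⟨i,a,hi,ha,rfl,rfl⟩|⟨i,a,hi,ha,rfl,rfl⟩|
        ⟨i,a,hi,ha,rfl,rfl⟩|⟨i,a,hi,ha,rfl,rfl⟩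
      · rfl
      · rfl
      · show 2*n*k + 2*(min (i:ℕ) (j:ℕ)) + 2 = 2*n*k + 2*(min (j:ℕ) (i:ℕ)) + 2
        rw [Nat.min_comm]
      · show 2*n*k + 2*(min (j:ℕ) (i:ℕ)) + 2 = 2*n*k + 2*(min (i:ℕ) (j:ℕ)) + 2
        rw [Nat.min_comm]
      · rfl
      · rfl
      · rfl
      · rfl
    · -- adjacent vertices
      intro x y hadj
      rcases gkn_adj hadj with ⟨i,a,b,rfl,rfl⟩|⟨i,a,b,rfl,rfl⟩|⟨i,j,a,a',hj,ha,ha',rfl,rfl⟩|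
        ⟨i,j,a,a',hj,ha,ha',rfl,rfl⟩|⟨i,a,hi,ha,rfl,rfl⟩|⟨i,a,hi,ha,rfl,rfl⟩|
        ⟨i,a,hi,ha,rfl,rfl⟩|⟨i,a,hi,ha,rfl,rfl⟩
      · exact vXY n k hn hk i a i.isLt a.isLt
      · exact circOk_comm (vXY n k hn hk i a i.isLt a.isLt)
      · show circOk _ _ (cvX k n i a) (cvX k n j a')
        rw [ha, ha', hj]
        exact vXX' n k hn hk i (by have := j.isLt; omega)
      · show circOk _ _ (cvX k n j a') (cvX k n i a)
        rw [ha, ha', hj]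
        exact circOk_comm (vXX' n k hn hk i (by have := j.isLt; omega))
      · show circOk _ _ (4*n) (cvX k n i a)
        rw [hi, ha]; exact vUX' n k hn hk
      · show circOk _ _ (cvX k n i a) (4*n)
        rw [hi, ha]; exact circOk_comm (vUX' n k hn hk)
      · show circOk _ _ (cvX k n i a) (4*n)
        rw [hi, ha]; exact vXU n k hn hk
      · show circOk _ _ (4*n) (cvX k n i a)
        rw [hi, ha]; exact circOk_comm (vXU n k hn hk)
    · -- adjacent edges
      intro u v w huv huw hvw
      rcases gkn_adj huv with ⟨i,a,b,rfl,rfl⟩|⟨i,a,b,rfl,rfl⟩|⟨i,j,a,a',hj,ha,ha',rfl,rfl⟩|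
        ⟨i,j,a,a',hj,ha,ha',rfl,rfl⟩|⟨i,a,hi,ha,rfl,rfl⟩|⟨i,a,hi,ha,rfl,rfl⟩|
        ⟨i,a,hi,ha,rfl,rfl⟩|⟨i,a,hi,ha,rfl,rfl⟩
      -- U1 : u = x-vertex (i, inl a), v = y-vertex (i, inr b)
      · rcases gkn_adj huw with ⟨i2,a2,b2,hu2,rfl⟩|⟨i2,a2,b2,hu2,rfl⟩|⟨i2,j2,a2,a2',hj2,ha2,ha2',hu2,rfl⟩|
          ⟨i2,j2,a2,a2',hj2,ha2,ha2',hu2,rfl⟩|⟨i2,a2,hi2,ha2,hu2,rfl⟩|⟨i2,a2,hi2,ha2,hu2,rfl⟩|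
          ⟨i2,a2,hi2,ha2,hu2,rfl⟩|⟨i2,a2,hi2,ha2,hu2,rfl⟩
        · -- (1,1) two block edges at x-vertex
          simp only [Option.some.injEq, Prod.mk.injEq, Sum.inl.injEq] at hu2
          obtain ⟨rfl, rfl⟩ := hu2
          have hb12 : (b:ℕ) ≠ (b2:ℕ) := by
            intro hh; exact hvw (by rw [Fin.val_injective hh])
          exact rowPair n k hn hk i a b b2 i.isLt a.isLt b.isLt b2.isLt hb12
        · simp at hu2
        · -- (1,3) block edge vs up-link at (i, inl 0)
          simp only [Option.some.injEq, Prod.mk.injEq, Sum.inl.injEq] at hu2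
          obtain ⟨rfl, rfl⟩ := hu2
          show circOk _ _ (edC k n i a b) (2*n*k + 2*(min (i:ℕ) (j2:ℕ)) + 2)
          rw [show min (i:ℕ) (j2:ℕ) = (i:ℕ) from by omega, ha2]
          exact row0_eL n k hn hk i b (by have := j2.isLt; omega) b.isLt
        · -- (1,4) block edge vs down-link at (j2, inl 1)
          simp only [Option.some.injEq, Prod.mk.injEq, Sum.inl.injEq] at hu2
          obtain ⟨rfl, rfl⟩ := hu2
          show circOk _ _ (edC k n i a b) (2*n*k + 2*(min (i:ℕ) (i2:ℕ)) + 2)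
          rw [show min (i:ℕ) (i2:ℕ) = (i:ℕ)-1 from by omega, ha2']
          exact row1_eL n k hn hk i b i.isLt (by omega) b.isLt
        · simp at hu2
        · -- (1,6) block edge vs e0 at (0, inl 1)
          simp only [Option.some.injEq, Prod.mk.injEq, Sum.inl.injEq] at hu2
          obtain ⟨rfl, rfl⟩ := hu2
          show circOk _ _ (edC k n i a b) (if (a:ℕ) = 1 then 2*n*k else 2*n*k + 2*n)
          rw [if_pos ha2, hi2, ha2]
          exact row1_e0 n k hn hk b b.isLt
        · -- (1,7) block edge vs en at (n-1, inl 0)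
          simp only [Option.some.injEq, Prod.mk.injEq, Sum.inl.injEq] at hu2
          obtain ⟨rfl, rfl⟩ := hu2
          show circOk _ _ (edC k n i a b) (if (a:ℕ) = 1 then 2*n*k else 2*n*k + 2*n)
          rw [if_neg (by omega), hi2, ha2]
          exact row0_en n k hn hk b b.isLt
        · simp at hu2
      -- U2 : u = y-vertex (i, inr b), v = x-vertex (i, inl a)
      · rcases gkn_adj huw with ⟨i2,a2,b2,hu2,rfl⟩|⟨i2,a2,b2,hu2,rfl⟩|⟨i2,j2,a2,a2',hj2,ha2,ha2',hu2,rfl⟩|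
          ⟨i2,j2,a2,a2',hj2,ha2,ha2',hu2,rfl⟩|⟨i2,a2,hi2,ha2,hu2,rfl⟩|⟨i2,a2,hi2,ha2,hu2,rfl⟩|
          ⟨i2,a2,hi2,ha2,hu2,rfl⟩|⟨i2,a2,hi2,ha2,hu2,rfl⟩
        · simp at hu2
        · -- (2,2) two block edges at y-vertex
          simp only [Option.some.injEq, Prod.mk.injEq, Sum.inr.injEq] at hu2
          obtain ⟨rfl, rfl⟩ := hu2
          have ha12 : (a:ℕ) ≠ (a2:ℕ) := by
            intro hh; exact hvw (by rw [Fin.val_injective hh])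
          exact colPair n k hn hk i a a2 b i.isLt b.isLt a.isLt a2.isLt ha12
        · simp at hu2
        · simp at hu2
        · simp at hu2
        · simp at hu2
        · simp at hu2
        · simp at hu2
      -- U3 : u = (i, inl a) with a=0, v = (j, inl a') up-link
      · rcases gkn_adj huw with ⟨i2,a2,b2,hu2,rfl⟩|⟨i2,a2,b2,hu2,rfl⟩|⟨i2,j2,a2,a2',hj2,ha2,ha2',hu2,rfl⟩|
          ⟨i2,j2,a2,a2',hj2,ha2,ha2',hu2,rfl⟩|⟨i2,a2,hi2,ha2,hu2,rfl⟩|⟨i2,a2,hi2,ha2,hu2,rfl⟩|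
          ⟨i2,a2,hi2,ha2,hu2,rfl⟩|⟨i2,a2,hi2,ha2,hu2,rfl⟩
        · -- (3,1) up-link vs block edge
          simp only [Option.some.injEq, Prod.mk.injEq, Sum.inl.injEq] at hu2
          obtain ⟨rfl, rfl⟩ := hu2
          show circOk _ _ (2*n*k + 2*(min (i:ℕ) (j:ℕ)) + 2) (edC k n i a b2)
          rw [show min (i:ℕ) (j:ℕ) = (i:ℕ) from by omega, ha]
          exact circOk_comm (row0_eL n k hn hk i b2 (by have := j.isLt; omega) b2.isLt)
        · simp at hu2
        · -- (3,3) two up-links: impossible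
          simp only [Option.some.injEq, Prod.mk.injEq, Sum.inl.injEq] at hu2
          obtain ⟨rfl, rfl⟩ := hu2
          have e1 : j = j2 := Fin.val_injective (by omega)
          have e2 : a' = a2' := Fin.val_injective (by omega)
          subst e1; subst e2; exact absurd rfl hvw
        · -- (3,4) a = 0 and a = 1: impossible
          simp only [Option.some.injEq, Prod.mk.injEq, Sum.inl.injEq] at hu2
          obtain ⟨rfl, rfl⟩ := hu2
          exact absurd ha (by omega)
        · simp at hu2
        · -- (3,6) a = 0 and a = 1: impossible
          simp only [Option.some.injEq, Prod.mk.injEq, Sum.inl.injEq] at hu2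
          obtain ⟨rfl, rfl⟩ := hu2
          exact absurd ha (by omega)
        · -- (3,7) i = n-1 and j = i+1 < n: impossible
          simp only [Option.some.injEq, Prod.mk.injEq, Sum.inl.injEq] at hu2
          obtain ⟨rfl, rfl⟩ := hu2
          exact absurd hj (by have := j.isLt; omega)
        · simp at hu2
      -- U4 : u = (j, inl a') with a'=1, v = (i, inl a) down-link
      · rcases gkn_adj huw with ⟨i2,a2,b2,hu2,rfl⟩|⟨i2,a2,b2,hu2,rfl⟩|⟨i2,j2,a2,a2',hj2,ha2,ha2',hu2,rfl⟩|
          ⟨i2,j2,a2,a2',hj2,ha2,ha2',hu2,rfl⟩|⟨i2,a2,hi2,ha2,hu2,rfl⟩|⟨i2,a2,hi2,ha2,hu2,rfl⟩|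
          ⟨i2,a2,hi2,ha2,hu2,rfl⟩|⟨i2,a2,hi2,ha2,hu2,rfl⟩
        · -- (4,1) down-link vs block edge
          simp only [Option.some.injEq, Prod.mk.injEq, Sum.inl.injEq] at hu2
          obtain ⟨rfl, rfl⟩ := hu2
          show circOk _ _ (2*n*k + 2*(min (j:ℕ) (i:ℕ)) + 2) (edC k n j a' b2)
          rw [show min (j:ℕ) (i:ℕ) = (j:ℕ)-1 from by omega, ha']
          exact circOk_comm (row1_eL n k hn hk j b2 j.isLt (by omega) b2.isLt)
        · simp at hu2
        · -- (4,3) a' = 1 and = 0: impossible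
          simp only [Option.some.injEq, Prod.mk.injEq, Sum.inl.injEq] at hu2
          obtain ⟨rfl, rfl⟩ := hu2
          exact absurd ha' (by omega)
        · -- (4,4) two down-links: impossible
          simp only [Option.some.injEq, Prod.mk.injEq, Sum.inl.injEq] at hu2
          obtain ⟨rfl, rfl⟩ := hu2
          have e1 : i = i2 := Fin.val_injective (by omega)
          have e2 : a = a2 := Fin.val_injective (by omega)
          subst e1; subst e2; exact absurd rfl hvw
        · simp at hu2
        · -- (4,6) j = 0 and j = i+1: impossible
          simp only [Option.some.injEq, Prod.mk.injEq, Sum.inl.injEq] at hu2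
          obtain ⟨rfl, rfl⟩ := hu2
          exact absurd hi2 (by omega)
        · -- (4,7) a' = 1 and = 0: impossible
          simp only [Option.some.injEq, Prod.mk.injEq, Sum.inl.injEq] at hu2
          obtain ⟨rfl, rfl⟩ := hu2
          exact absurd ha' (by omega)
        · simp at hu2
      -- U5 : u = none, v = (0, inl 1)
      · rcases gkn_adj huw with ⟨i2,a2,b2,hu2,rfl⟩|⟨i2,a2,b2,hu2,rfl⟩|⟨i2,j2,a2,a2',hj2,ha2,ha2',hu2,rfl⟩|
          ⟨i2,j2,a2,a2',hj2,ha2,ha2',hu2,rfl⟩|⟨i2,a2,hi2,ha2,hu2,rfl⟩|⟨i2,a2,hi2,ha2,hu2,rfl⟩|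
          ⟨i2,a2,hi2,ha2,hu2,rfl⟩|⟨i2,a2,hi2,ha2,hu2,rfl⟩
        · simp at hu2
        · simp at hu2
        · simp at hu2
        · simp at hu2
        · -- (5,5) v = w: impossible
          have e1 : i = i2 := Fin.val_injective (by omega)
          have e2 : a = a2 := Fin.val_injective (by omega)
          subst e1; subst e2; exact absurd rfl hvw
        · simp at hu2
        · simp at hu2
        · -- (5,8) e0 vs en at u
          show circOk _ _ (if (a:ℕ) = 1 then 2*n*k else 2*n*k + 2*n)
            (if (a2:ℕ) = 1 then 2*n*k else 2*n*k + 2*n)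
          rw [if_pos ha, if_neg (by omega)]
          exact e0_en n k hn hk
      -- U6 : u = (0, inl 1), v = none
      · rcases gkn_adj huw with ⟨i2,a2,b2,hu2,rfl⟩|⟨i2,a2,b2,hu2,rfl⟩|⟨i2,j2,a2,a2',hj2,ha2,ha2',hu2,rfl⟩|
          ⟨i2,j2,a2,a2',hj2,ha2,ha2',hu2,rfl⟩|⟨i2,a2,hi2,ha2,hu2,rfl⟩|⟨i2,a2,hi2,ha2,hu2,rfl⟩|
          ⟨i2,a2,hi2,ha2,hu2,rfl⟩|⟨i2,a2,hi2,ha2,hu2,rfl⟩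
        · -- (6,1) e0 vs block edge
          simp only [Option.some.injEq, Prod.mk.injEq, Sum.inl.injEq] at hu2
          obtain ⟨rfl, rfl⟩ := hu2
          show circOk _ _ (if (a:ℕ) = 1 then 2*n*k else 2*n*k + 2*n) (edC k n i a b2)
          rw [if_pos ha, hi, ha]
          exact circOk_comm (row1_e0 n k hn hk b2 b2.isLt)
        · simp at hu2
        · -- (6,3) a = 1 and = 0
          simp only [Option.some.injEq, Prod.mk.injEq, Sum.inl.injEq] at hu2
          obtain ⟨rfl, rfl⟩ := hu2
          exact absurd ha (by omega)
        · -- (6,4) i = 0 and i = i2+1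
          simp only [Option.some.injEq, Prod.mk.injEq, Sum.inl.injEq] at hu2
          obtain ⟨rfl, rfl⟩ := hu2
          exact absurd hi (by omega)
        · simp at hu2
        · -- (6,6) v = w = none
          exact absurd rfl hvw
        · -- (6,7) a = 1 and = 0
          simp only [Option.some.injEq, Prod.mk.injEq, Sum.inl.injEq] at hu2
          obtain ⟨rfl, rfl⟩ := hu2
          exact absurd ha (by omega)
        · simp at hu2
      -- U7 : u = (n-1, inl 0), v = none
      · rcases gkn_adj huw with ⟨i2,a2,b2,hu2,rfl⟩|⟨i2,a2,b2,hu2,rfl⟩|⟨i2,j2,a2,a2',hj2,ha2,ha2',hu2,rfl⟩|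
          ⟨i2,j2,a2,a2',hj2,ha2,ha2',hu2,rfl⟩|⟨i2,a2,hi2,ha2,hu2,rfl⟩|⟨i2,a2,hi2,ha2,hu2,rfl⟩|
          ⟨i2,a2,hi2,ha2,hu2,rfl⟩|⟨i2,a2,hi2,ha2,hu2,rfl⟩
        · -- (7,1) en vs block edge
          simp only [Option.some.injEq, Prod.mk.injEq, Sum.inl.injEq] at hu2
          obtain ⟨rfl, rfl⟩ := hu2
          show circOk _ _ (if (a:ℕ) = 1 then 2*n*k else 2*n*k + 2*n) (edC k n i a b2)
          rw [if_neg (by omega), hi, ha]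
          exact circOk_comm (row0_en n k hn hk b2 b2.isLt)
        · simp at hu2
        · -- (7,3) j2 = i+1 = n: impossible
          simp only [Option.some.injEq, Prod.mk.injEq, Sum.inl.injEq] at hu2
          obtain ⟨rfl, rfl⟩ := hu2
          exact absurd hj2 (by have := j2.isLt; omega)
        · -- (7,4) a = 0 and = 1
          simp only [Option.some.injEq, Prod.mk.injEq, Sum.inl.injEq] at hu2
          obtain ⟨rfl, rfl⟩ := hu2
          exact absurd ha (by omega)
        · simp at hu2
        · -- (7,6) a = 0 and = 1
          simp only [Option.some.injEq, Prod.mk.injEq, Sum.inl.injEq] at hu2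
          obtain ⟨rfl, rfl⟩ := hu2
          exact absurd ha (by omega)
        · -- (7,7) v = w = none
          exact absurd rfl hvw
        · simp at hu2
      -- U8 : u = none, v = (n-1, inl 0)
      · rcases gkn_adj huw with ⟨i2,a2,b2,hu2,rfl⟩|⟨i2,a2,b2,hu2,rfl⟩|⟨i2,j2,a2,a2',hj2,ha2,ha2',hu2,rfl⟩|
          ⟨i2,j2,a2,a2',hj2,ha2,ha2',hu2,rfl⟩|⟨i2,a2,hi2,ha2,hu2,rfl⟩|⟨i2,a2,hi2,ha2,hu2,rfl⟩|
          ⟨i2,a2,hi2,ha2,hu2,rfl⟩|⟨i2,a2,hi2,ha2,hu2,rfl⟩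
        · simp at hu2
        · simp at hu2
        · simp at hu2
        · simp at hu2
        · -- (8,5) en vs e0 at u
          show circOk _ _ (if (a:ℕ) = 1 then 2*n*k else 2*n*k + 2*n)
            (if (a2:ℕ) = 1 then 2*n*k else 2*n*k + 2*n)
          rw [if_neg (by omega), if_pos ha2]
          exact circOk_comm (e0_en n k hn hk)
        · simp at hu2
        · simp at hu2
        · -- (8,8) v = w: impossible
          have e1 : i = i2 := Fin.val_injective (by omega)
          have e2 : a = a2 := Fin.val_injective (by omega)
          subst e1; subst e2; exact absurd rfl hvw
    · -- edge vs endpoints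
      intro x y hadj
      rcases gkn_adj hadj with ⟨i,a,b,rfl,rfl⟩|⟨i,a,b,rfl,rfl⟩|⟨i,j,a,a',hj,ha,ha',rfl,rfl⟩|
        ⟨i,j,a,a',hj,ha,ha',rfl,rfl⟩|⟨i,a,hi,ha,rfl,rfl⟩|⟨i,a,hi,ha,rfl,rfl⟩|
        ⟨i,a,hi,ha,rfl,rfl⟩|⟨i,a,hi,ha,rfl,rfl⟩
      · exact ⟨eXY_x n k hn hk i a b i.isLt a.isLt b.isLt,
          eXY_y n k hn hk i a b i.isLt a.isLt b.isLt⟩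
      · exact ⟨eXY_y n k hn hk i a b i.isLt a.isLt b.isLt,
          eXY_x n k hn hk i a b i.isLt a.isLt b.isLt⟩
      · constructor
        · show circOk _ _ (2*n*k + 2*(min (i:ℕ) (j:ℕ)) + 2) (cvX k n i a)
          rw [show min (i:ℕ) (j:ℕ) = (i:ℕ) from by omega, ha]
          exact eL_x n k hn hk i (by have := j.isLt; omega)
        · show circOk _ _ (2*n*k + 2*(min (i:ℕ) (j:ℕ)) + 2) (cvX k n j a')
          rw [show min (i:ℕ) (j:ℕ) = (i:ℕ) from by omega, ha', hj]
          exact eL_x' n k hn hk i (by have := j.isLt; omega)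
      · constructor
        · show circOk _ _ (2*n*k + 2*(min (j:ℕ) (i:ℕ)) + 2) (cvX k n j a')
          rw [show min (j:ℕ) (i:ℕ) = (i:ℕ) from by omega, ha', hj]
          exact eL_x' n k hn hk i (by have := j.isLt; omega)
        · show circOk _ _ (2*n*k + 2*(min (j:ℕ) (i:ℕ)) + 2) (cvX k n i a)
          rw [show min (j:ℕ) (i:ℕ) = (i:ℕ) from by omega, ha]
          exact eL_x n k hn hk i (by have := j.isLt; omega)
      · constructor
        · show circOk _ _ (if (a:ℕ) = 1 then 2*n*k else 2*n*k + 2*n) (4*n)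
          rw [if_pos ha]; exact e0_u n k hn hk
        · show circOk _ _ (if (a:ℕ) = 1 then 2*n*k else 2*n*k + 2*n) (cvX k n i a)
          rw [if_pos ha, hi, ha]; exact e0_x' n k hn hk
      · constructor
        · show circOk _ _ (if (a:ℕ) = 1 then 2*n*k else 2*n*k + 2*n) (cvX k n i a)
          rw [if_pos ha, hi, ha]; exact e0_x' n k hn hk
        · show circOk _ _ (if (a:ℕ) = 1 then 2*n*k else 2*n*k + 2*n) (4*n)
          rw [if_pos ha]; exact e0_u n k hn hk
      · constructor
        · show circOk _ _ (if (a:ℕ) = 1 then 2*n*k else 2*n*k + 2*n) (cvX k n i a)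
          rw [if_neg (by omega), hi, ha]; exact en_x n k hn hk
        · show circOk _ _ (if (a:ℕ) = 1 then 2*n*k else 2*n*k + 2*n) (4*n)
          rw [if_neg (by omega)]; exact en_u n k hn hk
      · constructor
        · show circOk _ _ (if (a:ℕ) = 1 then 2*n*k else 2*n*k + 2*n) (4*n)
          rw [if_neg (by omega)]; exact en_u n k hn hk
        · show circOk _ _ (if (a:ℕ) = 1 then 2*n*k else 2*n*k + 2*n) (cvX k n i a)
          rw [if_neg (by omega), hi, ha]; exact en_x n k hn hk
  constructor
  · exact ⟨cvF k n, ceF k n, hcol⟩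
  · have hmem : ((2*n*(k+1)+1 : ℕ) : ℝ) / ((2*n : ℕ) : ℝ) ∈
        {x : ℝ | ∃ p q : ℕ, 0 < q ∧
          (∃ cv ce, IsCircTotalColoring (Gkn k n) p q cv ce) ∧ x = (p : ℝ) / q} :=
      ⟨2*n*(k+1)+1, 2*n, by omega, ⟨cvF k n, ceF k n, hcol⟩, rfl⟩
    have hbdd : BddBelow {x : ℝ | ∃ p q : ℕ, 0 < q ∧
        (∃ cv ce, IsCircTotalColoring (Gkn k n) p q cv ce) ∧ x = (p : ℝ) / q} := by
      refine ⟨0, ?_⟩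
      rintro x ⟨p, q, hq, -, rfl⟩
      positivity
    have h1 : circTotalChromatic (Gkn k n) ≤ ((2*n*(k+1)+1 : ℕ) : ℝ) / ((2*n : ℕ) : ℝ) :=
      csInf_le hbdd hmem
    have h2 : ((2*n*(k+1)+1 : ℕ) : ℝ) / ((2*n : ℕ) : ℝ) = (k : ℝ) + 1 + 1 / (2*n) := by
      have hn0 : (n:ℝ) ≠ 0 := Nat.cast_ne_zero.mpr (by omega)
      push_cast
      field_simp
      try ring
    rw [h2] at h1
    exact h1
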